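/- Let ρ̄ : (0,1] → ℝ be differentiable with ρ̄(1) > 0, let p̄ : (0,1] → ℝ satisfy 0 ≤ p̄(τ) ≤ ρ̄(τ)/3 for all τ ∈ (0,1], and suppose ρ̄ satisfies the background Euler equation ∂_τ ρ̄(τ) = (3/τ)(ρ̄(τ) + p̄(τ)) on (0,1]. Then for every τ ∈ (0,1] one has 3τ³·ρ̄(1) ≤ ∂_τ ρ̄(τ) ≤ 4τ²·ρ̄(1). -/

import Mathlib

/-- If `f` has nonnegative derivative on `(0,1]`, then `f τ ≤ f 1` for `τ ∈ (0,1]`. -/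
lemma mono_aux_bg (f f' : ℝ → ℝ)
    (hd : ∀ x ∈ Set.Ioc (0:ℝ) 1, HasDerivAt f (f' x) x)
    (hn : ∀ x ∈ Set.Ioc (0:ℝ) 1, 0 ≤ f' x)
    (τ : ℝ) (hτ : τ ∈ Set.Ioc (0:ℝ) 1) : f τ ≤ f 1 := by
  have hsub : Set.Icc τ 1 ⊆ Set.Ioc (0:ℝ) 1 := fun x hx =>
    ⟨lt_of_lt_of_le hτ.1 hx.1, hx.2⟩
  have hmono : MonotoneOn f (Set.Icc τ 1) := by
    apply monotoneOn_of_deriv_nonneg (convex_Icc τ 1)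
    · exact fun x hx => (hd x (hsub hx)).continuousAt.continuousWithinAt
    · intro x hx
      rw [interior_Icc] at hx
      exact ((hd x (hsub ⟨hx.1.le, hx.2.le⟩)).differentiableAt).differentiableWithinAt
    · intro x hx
      rw [interior_Icc] at hx
      have hx' := hsub ⟨hx.1.le, hx.2.le⟩
      rw [(hd x hx').deriv]
      exact hn x hx'
  exact hmono ⟨le_refl τ, hτ.2⟩ ⟨hτ.2, le_refl 1⟩ hτ.2

theorem background_density_deriv_bounds (ρ p : ℝ → ℝ)
    (hρ1 : 0 < ρ 1)
    (hp : ∀ τ ∈ Set.Ioc (0:ℝ) 1, 0 ≤ p τ ∧ p τ ≤ ρ τ / 3)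
    (heuler : ∀ τ ∈ Set.Ioc (0:ℝ) 1, HasDerivAt ρ ((3 / τ) * (ρ τ + p τ)) τ) :
    ∀ τ ∈ Set.Ioc (0:ℝ) 1, 3 * τ ^ 3 * ρ 1 ≤ deriv ρ τ ∧ deriv ρ τ ≤ 4 * τ ^ 2 * ρ 1 := by
  -- upper bound on ρ: ρ τ ≤ τ^3 ρ 1, via monotonicity of ρ x / x^3
  have hup : ∀ τ ∈ Set.Ioc (0:ℝ) 1, ρ τ ≤ τ ^ 3 * ρ 1 := by
    intro τ hτ
    have h := mono_aux_bg (fun x => ρ x / x ^ 3) (fun x => 3 * p x / x ^ 4)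
      (fun x hx => by
        have hx0 : x ≠ 0 := ne_of_gt hx.1
        have := (heuler x hx).fun_div (hasDerivAt_pow 3 x) (pow_ne_zero 3 hx0)
        refine this.congr_deriv ?_
        field_simp
        ring)
      (fun x hx => by
        have := (hp x hx).1
        positivity)
      τ hτ
    have hτ0 : τ ≠ 0 := ne_of_gt hτ.1
    have hτp : 0 < τ := hτ.1
    simp only [one_pow, div_one] at h
    have hτ3 : (0:ℝ) < τ ^ 3 := by positivity
    calc ρ τ = ρ τ / τ ^ 3 * τ ^ 3 := by field_simp
    _ ≤ ρ 1 * τ ^ 3 := by exact mul_le_mul_of_nonneg_right h hτ3.le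
    _ = τ ^ 3 * ρ 1 := by ring
  -- lower bound on ρ: τ^4 ρ 1 ≤ ρ τ, via antitonicity of ρ x / x^4
  have hlo : ∀ τ ∈ Set.Ioc (0:ℝ) 1, τ ^ 4 * ρ 1 ≤ ρ τ := by
    intro τ hτ
    have h := mono_aux_bg (fun x => -(ρ x / x ^ 4)) (fun x => (ρ x - 3 * p x) / x ^ 5)
      (fun x hx => by
        have hx0 : x ≠ 0 := ne_of_gt hx.1
        have := ((heuler x hx).fun_div (hasDerivAt_pow 4 x) (pow_ne_zero 4 hx0)).neg
        refine this.congr_deriv ?_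
        field_simp
        ring)
      (fun x hx => by
        have h1 := (hp x hx).2
        have hxp : (0:ℝ) < x := hx.1
        have hx5 : (0:ℝ) < x ^ 5 := by positivity
        apply div_nonneg _ hx5.le
        linarith)
      τ hτ
    have hτ0 : τ ≠ 0 := ne_of_gt hτ.1
    have hτp : 0 < τ := hτ.1
    simp only [one_pow, div_one, neg_le_neg_iff] at h
    have hτ4 : (0:ℝ) < τ ^ 4 := by positivity
    calc τ ^ 4 * ρ 1 ≤ τ ^ 4 * (ρ τ / τ ^ 4) := by
          exact mul_le_mul_of_nonneg_left h hτ4.le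
    _ = ρ τ := by field_simp
  intro τ hτ
  have hτ0 := hτ.1
  have hd := (heuler τ hτ).deriv
  rw [hd]
  have hp1 := (hp τ hτ).1
  have hp2 := (hp τ hτ).2
  have hu := hup τ hτ
  have hl := hlo τ hτ
  constructor
  · have : 3 * τ ^ 3 * ρ 1 * τ ≤ 3 * (ρ τ + p τ) := by nlinarith
    rw [div_mul_eq_mul_div, le_div_iff₀ hτ0]
    linarith
  · have : 3 * (ρ τ + p τ) ≤ 4 * τ ^ 2 * ρ 1 * τ := by nlinarith
    rw [div_mul_eq_mul_div, div_le_iff₀ hτ0]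
    linarith
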